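/- Let S be symmetric positive-definite and v ∈ R^d with ⟨S⁻¹v, v⟩ ≤ c. Then S⁻¹ v vᵀ S⁻¹ ⪯ (1 + c)² (S + vvᵀ)⁻¹ v vᵀ (S + vvᵀ)⁻¹. -/

import Mathlib

open Matrix

lemma mul_vecMulVec' {d : ℕ} (M : Matrix (Fin d) (Fin d) ℝ) (a b : Fin d → ℝ) :
    M * vecMulVec a b = vecMulVec (M *ᵥ a) b := by
  ext i j
  simp [mul_apply, vecMulVec_apply, mulVec, dotProduct, Finset.sum_mul, mul_assoc]

lemma vecMulVec_mul' {d : ℕ} (M : Matrix (Fin d) (Fin d) ℝ) (a b : Fin d → ℝ) :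
    vecMulVec a b * M = vecMulVec a (Mᵀ *ᵥ b) := by
  ext i j
  simp only [mul_apply, vecMulVec_apply, mulVec, dotProduct, transpose_apply, Finset.mul_sum]
  exact Finset.sum_congr rfl fun k _ => by ring

lemma vecMulVec_mulVec' {d : ℕ} (a b x : Fin d → ℝ) :
    vecMulVec a b *ᵥ x = (b ⬝ᵥ x) • a := by
  ext i
  simp only [mulVec, vecMulVec_apply, dotProduct, Pi.smul_apply, smul_eq_mul, Finset.sum_mul]
  exact Finset.sum_congr rfl fun k _ => by ring

lemma smul_vecMulVec' {d : ℕ} (r : ℝ) (a b : Fin d → ℝ) :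
    vecMulVec (r • a) b = r • vecMulVec a b := by
  ext i j
  simp [vecMulVec_apply, mul_assoc]

lemma vecMulVec_smul' {d : ℕ} (r : ℝ) (a b : Fin d → ℝ) :
    vecMulVec a (r • b) = r • vecMulVec a b := by
  ext i j
  simp [vecMulVec_apply]; ring

lemma posSemidef_smul_vecMulVec {d : ℕ} (r : ℝ) (hr : 0 ≤ r) (w : Fin d → ℝ) :
    (r • vecMulVec w w).PosSemidef := by
  rw [posSemidef_iff_dotProduct_mulVec]
  constructor
  · ext i j
    simp [vecMulVec_apply, mul_comm]
  · intro x
    have : star x ⬝ᵥ ((r • vecMulVec w w) *ᵥ x) = r * (w ⬝ᵥ x) ^ 2 := by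
      simp only [smul_mulVec, vecMulVec_mulVec', dotProduct_smul, star_trivial,
        smul_eq_mul, smul_smul]
      rw [dotProduct_comm x w]
      ring
    rw [this]
    positivity

theorem rank_one_perturb_loewner {d : ℕ} (S : Matrix (Fin d) (Fin d) ℝ) (hS : S.PosDef)
    (v : Fin d → ℝ) (c : ℝ) (hc : 0 ≤ c) (hvc : v ⬝ᵥ (S⁻¹ *ᵥ v) ≤ c) :
    ((1 + c) ^ 2 • ((S + vecMulVec v v)⁻¹ * vecMulVec v v * (S + vecMulVec v v)⁻¹)
      - S⁻¹ * vecMulVec v v * S⁻¹).PosSemidef := by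
  set w := S⁻¹ *ᵥ v with hw
  set t := v ⬝ᵥ w with ht
  have hSinv : (S⁻¹).PosDef := hS.inv
  have ht0 : 0 ≤ t := by simpa using hSinv.posSemidef.dotProduct_mulVec_nonneg v
  have h1t : (0:ℝ) < 1 + t := by linarith
  set A := S + vecMulVec v v with hA
  have hApd : A.PosDef := hS.add_posSemidef (by simpa using posSemidef_smul_vecMulVec 1 zero_le_one v)
  have hAinvH : (A⁻¹).IsHermitian := hApd.isHermitian.inv
  have hSinvT : (S⁻¹)ᵀ = S⁻¹ := by
    ext i j; simpa using (congrFun (congrFun hS.isHermitian.inv j) i).symm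
  have hAinvT : (A⁻¹)ᵀ = A⁻¹ := by
    ext i j; simpa using (congrFun (congrFun hAinvH j) i).symm
  -- A *ᵥ w = (1+t) • v
  have hSdet : IsUnit S.det := hS.det_pos.ne'.isUnit
  have hAdet : IsUnit A.det := hApd.det_pos.ne'.isUnit
  have hSw : S *ᵥ w = v := by
    rw [hw, mulVec_mulVec, Matrix.mul_nonsing_inv _ hSdet, one_mulVec]
  have hAw : A *ᵥ w = (1 + t) • v := by
    rw [hA, add_mulVec, hSw, vecMulVec_mulVec']
    ext i; simp [ht]; ring
  have hAv : A⁻¹ *ᵥ v = (1 + t)⁻¹ • w := by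
    have h1 : A⁻¹ *ᵥ (A *ᵥ w) = w := by
      rw [mulVec_mulVec, Matrix.nonsing_inv_mul _ hAdet, one_mulVec]
    rw [hAw, mulVec_smul] at h1
    rw [← h1, smul_smul, inv_mul_cancel₀ h1t.ne', one_smul]
  -- rewrite the two products as outer products
  have hE1 : A⁻¹ * vecMulVec v v * A⁻¹ = ((1 + t)⁻¹ * (1 + t)⁻¹) • vecMulVec w w := by
    rw [mul_vecMulVec', vecMulVec_mul', hAinvT, hAv, smul_vecMulVec', _root_.vecMulVec_smul',
      smul_smul]
  have hE2 : S⁻¹ * vecMulVec v v * S⁻¹ = vecMulVec w w := by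
    rw [mul_vecMulVec', vecMulVec_mul', hSinvT, ← hw]
  rw [hE1, hE2, smul_smul]
  have hgoal : ((1 + c) ^ 2 * ((1 + t)⁻¹ * (1 + t)⁻¹)) • vecMulVec w w - vecMulVec w w
      = ((1 + c) ^ 2 * ((1 + t)⁻¹ * (1 + t)⁻¹) - 1) • vecMulVec w w := by
    rw [sub_smul, one_smul]
  rw [hgoal]
  apply posSemidef_smul_vecMulVec
  have htc : t ≤ c := hvc
  have h2 : (1 + t) ^ 2 ≤ (1 + c) ^ 2 := by nlinarith
  have h3 : (0:ℝ) < (1 + t) ^ 2 := by positivity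
  have h4 : (1 + c) ^ 2 * ((1 + t)⁻¹ * (1 + t)⁻¹) * (1 + t) ^ 2 = (1 + c) ^ 2 := by
    field_simp
  nlinarith [h2, h3, h4]
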